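/- arXiv:1607.04737 — 5 statements merged into one kernel-verified Lean document; each statement's English description precedes it below -/
import Mathlib

section
/- Let μ be the product measure on (Fin (n+1) → ℝ) of the Gamma(γ_j, 1) distributions, and for y ∈ (0,∞)^{n+1} set Ξ_i(y) = (1/σ_i)·∑_{j=1}^{n+1} c_{i,j} y_j. Then for every t = (t_1,…,t_n) with all t_i ≥ 0, the Laplace transform of the multivariate gamma vector (Ξ_1,…,Ξ_n) satisfies ∫ exp(−∑_{i=1}^n t_i Ξ_i(y)) dμ(y) = ∏_{j=1}^{n+1} (1 + ∑_{i=1}^n (c_{i,j}/σ_i)·t_i)^{−γ_j}. -/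
open MeasureTheory ProbabilityTheory Real

/-- Fubini for a product of functions under a general finite product measure. -/
theorem my_integral_pi_prod {n : ℕ} {E : Fin n → Type*} [∀ i, MeasurableSpace (E i)]
    (μ : ∀ i, Measure (E i)) [∀ i, SigmaFinite (μ i)] (f : (i : Fin n) → E i → ℝ) :
    ∫ x : (i : Fin n) → E i, ∏ i, f i (x i) ∂Measure.pi μ = ∏ i, ∫ x, f i x ∂μ i := by
  induction n with
  | zero => simp [Measure.pi_of_empty, Measure.real]
  | succ n n_ih =>
      calc
        _ = ∫ x : E 0 × ((i : Fin n) → E (Fin.succ i)),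
            f 0 x.1 * ∏ i : Fin n, f (Fin.succ i) (x.2 i)
            ∂((μ 0).prod (Measure.pi fun i => μ (Fin.succ i))) := by
          rw [← ((measurePreserving_piFinSuccAbove μ 0).symm).integral_comp']
          simp_rw [MeasurableEquiv.piFinSuccAbove_symm_apply, Fin.insertNthEquiv,
            Fin.prod_univ_succ, Fin.insertNth_zero, Equiv.coe_fn_mk, Fin.cons_succ]
          rfl
        _ = (∫ x, f 0 x ∂μ 0) * ∏ i : Fin n, ∫ x, f (Fin.succ i) x ∂μ (Fin.succ i) := by
          rw [← n_ih, ← integral_prod_mul]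
        _ = _ := by rw [Fin.prod_univ_succ]

/-- Laplace transform of the Gamma(a,1) distribution. -/
theorem my_gamma_laplace {a s : ℝ} (ha : 0 < a) (hs : 0 ≤ s) :
    ∫ y, Real.exp (-(s * y)) ∂(gammaMeasure a 1) = (1 + s) ^ (-a) := by
  have h1s : 0 < 1 + s := by linarith
  have hmeas : Measurable fun y : ℝ => Real.exp (-(s * y)) :=
    ((measurable_id.const_mul s).neg).exp
  rw [integral_eq_lintegral_of_nonneg_ae (ae_of_all _ fun y => (Real.exp_pos _).le)
    hmeas.aestronglyMeasurable]
  rw [gammaMeasure, lintegral_withDensity_eq_lintegral_mul _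
    (show Measurable (gammaPDF a 1) from (measurable_gammaPDFReal a 1).ennreal_ofReal) hmeas.ennreal_ofReal]
  have key : ∀ y : ℝ, gammaPDF a 1 y * ENNReal.ofReal (Real.exp (-(s * y)))
      = ENNReal.ofReal ((1 + s) ^ (-a)) * gammaPDF a (1 + s) y := by
    intro y
    rcases lt_or_ge y 0 with hy | hy
    · simp [gammaPDF_of_neg hy]
    · rw [gammaPDF_of_nonneg hy, gammaPDF_of_nonneg hy,
        ← ENNReal.ofReal_mul (by positivity), ← ENNReal.ofReal_mul (by positivity)]
      congr 1
      rw [one_rpow]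
      have : Real.exp (-(1 * y)) * Real.exp (-(s * y)) = Real.exp (-((1 + s) * y)) := by
        rw [← Real.exp_add]; ring_nf
      have h2 : (1 + s) ^ (-a) * (1 + s) ^ a = 1 := by
        rw [← Real.rpow_add h1s, neg_add_cancel, Real.rpow_zero]
      calc 1 / Real.Gamma a * y ^ (a - 1) * Real.exp (-(1 * y)) * Real.exp (-(s * y))
          = ((1 + s) ^ (-a) * (1 + s) ^ a) * (1 / Real.Gamma a * y ^ (a - 1)
              * (Real.exp (-(1 * y)) * Real.exp (-(s * y)))) := by rw [h2]; ring
        _ = (1 + s) ^ (-a) * ((1 + s) ^ a / Real.Gamma a * y ^ (a - 1)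
              * Real.exp (-((1 + s) * y))) := by rw [this]; ring
  simp only [Pi.mul_apply]
  rw [lintegral_congr key]
  rw [lintegral_const_mul _ (show Measurable (gammaPDF a (1 + s)) from (measurable_gammaPDFReal a (1 + s)).ennreal_ofReal),
    lintegral_gammaPDF_eq_one ha h1s, mul_one,
    ENNReal.toReal_ofReal (by positivity)]
/-- Laplace transform of the multivariate gamma vector
`Ξ_i(y) = (1/σ_i) ∑_j c_{i,j} y_j` under the product of `Gamma(γ_j, 1)` laws. -/
theorem laplace_transform_multivariate_gamma
    (n : ℕ) (hn : 1 ≤ n)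
    (σ : Fin n → ℝ) (hσ : ∀ i, 0 < σ i)
    (γ : Fin (n + 1) → ℝ) (hγ : ∀ j, 0 < γ j)
    (c : Fin n → Fin (n + 1) → ℝ) (hc : ∀ i j, c i j = 0 ∨ c i j = 1)
    (t : Fin n → ℝ) (ht : ∀ i, 0 ≤ t i) :
    ∫ y : Fin (n + 1) → ℝ,
        Real.exp (-∑ i, t i * ((1 / σ i) * ∑ j, c i j * y j))
        ∂(Measure.pi fun j => gammaMeasure (γ j) 1)
      = ∏ j, (1 + ∑ i, (c i j / σ i) * t i) ^ (-(γ j)) := by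
  have hs : ∀ j, 0 ≤ ∑ i, (c i j / σ i) * t i := by
    intro j
    refine Finset.sum_nonneg fun i _ => mul_nonneg (div_nonneg ?_ (hσ i).le) (ht i)
    rcases hc i j with h | h <;> simp [h]
  haveI : ∀ j, SigmaFinite (gammaMeasure (γ j) 1) := fun j =>
    haveI := isProbabilityMeasure_gammaMeasure (hγ j) one_pos; inferInstance
  have hswap : ∀ y : Fin (n + 1) → ℝ,
      Real.exp (-∑ i, t i * ((1 / σ i) * ∑ j, c i j * y j))
        = ∏ j, Real.exp (-((∑ i, (c i j / σ i) * t i) * y j)) := by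
    intro y
    rw [← Real.exp_sum]
    congr 1
    have h : ∑ i, t i * ((1 / σ i) * ∑ j, c i j * y j)
        = ∑ j, (∑ i, (c i j / σ i) * t i) * y j := by
      simp_rw [Finset.mul_sum, Finset.sum_mul]
      rw [Finset.sum_comm]
      exact Finset.sum_congr rfl fun j _ => Finset.sum_congr rfl fun i _ => by ring
    rw [h, ← Finset.sum_neg_distrib]
  simp_rw [hswap]
  rw [my_integral_pi_prod (fun j => gammaMeasure (γ j) 1)
    (fun j x => Real.exp (-((∑ i, (c i j / σ i) * t i) * x)))]
  exact Finset.prod_congr rfl fun j _ => my_gamma_laplace (hγ j) (hs j)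
end

section
/- In the Pa^c(σ,γ) model, for every x = (x_1,…,x_n) with all x_i ≥ 0, the joint survival (decumulative distribution) function of (X_1,…,X_n) is ν{(λ,y) : X_i(λ,y) > x_i for all i = 1,…,n} = ∏_{j=1}^{n+1} (1 + ∑_{i=1}^n (c_{i,j}/σ_i)·x_i)^{−γ_j}. In other words, the vector (Λ_1/Ξ_1,…,Λ_n/Ξ_n) of unit exponentials divided by coordinates of the multivariate gamma vector Ξ_i = (1/σ_i)∑_j c_{i,j}Y_j has the multivariate Pareto d.d.f. above. -/
open MeasureTheory ProbabilityTheory Real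

/-- The `Pa^c(σ,γ)` model measure: product of `n` unit exponentials (`Gamma(1,1)`)
and `n+1` independent `Gamma(γ_j, 1)` laws. -/
noncomputable def paretoModelMeasure (n : ℕ) (γ : Fin (n + 1) → ℝ) :
    Measure ((Fin n → ℝ) × (Fin (n + 1) → ℝ)) :=
  (Measure.pi fun _ : Fin n => gammaMeasure 1 1).prod
    (Measure.pi fun j => gammaMeasure (γ j) 1)

/-- The coordinates `X_i(λ,y) = σ_i λ_i / ∑_j c_{i,j} y_j` of the multivariate Pareto. -/
noncomputable def paretoCoord (n : ℕ) (σ : Fin n → ℝ) (c : Fin n → Fin (n + 1) → ℝ)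
    (i : Fin n) (p : (Fin n → ℝ) × (Fin (n + 1) → ℝ)) : ℝ :=
  σ i * p.1 i / ∑ j, c i j * p.2 j

open Set
open scoped ENNReal

lemma lintegral_pi_fin_prod : ∀ (n : ℕ) (μ : Fin n → Measure ℝ),
    (∀ i, SigmaFinite (μ i)) → ∀ (f : Fin n → ℝ → ℝ≥0∞), (∀ i, Measurable (f i)) →
    ∫⁻ y, ∏ i, f i (y i) ∂Measure.pi μ = ∏ i, ∫⁻ s, f i s ∂μ i := by
  intro n
  induction n with
  | zero =>
      intro μ hμ f hf
      haveI := hμ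
      simp [lintegral_const, Measure.pi_univ]
  | succ n ih =>
      intro μ hμ f hf
      haveI := hμ
      have hmp := measurePreserving_piFinSuccAbove μ 0
      calc ∫⁻ y, ∏ i, f i (y i) ∂Measure.pi μ
          = ∫⁻ p : ℝ × (Fin n → ℝ), f 0 p.1 * ∏ j : Fin n, f j.succ (p.2 j)
              ∂((μ 0).prod (Measure.pi fun j => μ ((0 : Fin (n+1)).succAbove j))) := by
            rw [← hmp.lintegral_comp_emb
              (MeasurableEquiv.piFinSuccAbove (fun _ => ℝ) 0).measurableEmbedding]
            refine lintegral_congr fun y => ?_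
            rw [Fin.prod_univ_succ]
            simp [MeasurableEquiv.piFinSuccAbove, Fin.zero_succAbove, Fin.tail]
        _ = (∫⁻ s, f 0 s ∂μ 0) * ∏ j : Fin n, ∫⁻ s, f j.succ s ∂μ j.succ := by
            rw [lintegral_prod_mul (f := fun a => f 0 a) (g := fun (z : Fin n → ℝ) => ∏ j : Fin n, f j.succ (z j)) (hf 0).aemeasurable
              ((Finset.measurable_prod _ fun j _ =>
                (hf j.succ).comp (measurable_pi_apply j))).aemeasurable]
            congr 1
            have := ih (fun j => μ j.succ) (fun j => hμ j.succ)
              (fun j => f j.succ) (fun j => hf j.succ)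
            simp only [Fin.zero_succAbove]
            exact this
        _ = ∏ i, ∫⁻ s, f i s ∂μ i := by rw [Fin.prod_univ_succ]

lemma gammaMeasure_Iic_zero (a r : ℝ) : gammaMeasure a r (Iic 0) = 0 := by
  rw [gammaMeasure, withDensity_apply _ measurableSet_Iic,
    setLIntegral_congr (Iio_ae_eq_Iic (a := (0:ℝ))).symm]
  exact lintegral_gammaPDF_of_nonpos le_rfl

lemma gammaMeasure_one_one_Ioi {b : ℝ} (hb : 0 ≤ b) :
    gammaMeasure 1 1 (Ioi b) = ENNReal.ofReal (exp (-b)) := by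
  rw [gammaMeasure, withDensity_apply _ measurableSet_Ioi]
  have h1 : ∀ y ∈ Ioi b, gammaPDF 1 1 y = ENNReal.ofReal (exp (-y)) := by
    intro y hy
    rw [gammaPDF_of_nonneg (le_of_lt (lt_of_le_of_lt hb hy))]
    norm_num [Real.Gamma_one, Real.rpow_natCast]
  rw [setLIntegral_congr_fun_ae measurableSet_Ioi (ae_of_all _ h1),
    ← ofReal_integral_eq_lintegral_ofReal]
  · rw [integral_exp_neg_Ioi]
  · have hI : IntegrableOn (fun x : ℝ => exp (-x)) (Ioi b) := by
      simpa using exp_neg_integrableOn_Ioi b zero_lt_one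
    exact hI
  · exact ae_of_all _ fun y => (exp_pos _).le

lemma gamma_laplace {a : ℝ} (ha : 0 < a) {t : ℝ} (ht : 0 ≤ t) :
    ∫⁻ y, ENNReal.ofReal (exp (-(t * y))) ∂gammaMeasure a 1
      = ENNReal.ofReal ((1 + t) ^ (-a)) := by
  have h1t : (0:ℝ) < 1 + t := by linarith
  have hm : Measurable (gammaPDF a 1) := (measurable_gammaPDFReal a 1).ennreal_ofReal
  rw [gammaMeasure, lintegral_withDensity_eq_lintegral_mul _ hm
    (g := fun y => ENNReal.ofReal (exp (-(t * y)))) (by fun_prop)]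
  have key : ∀ y : ℝ, (gammaPDF a 1 * fun y => ENNReal.ofReal (exp (-(t * y)))) y
      = ENNReal.ofReal ((1 + t) ^ (-a)) * gammaPDF a (1 + t) y := by
    intro y
    simp only [Pi.mul_apply]
    rcases lt_or_ge y 0 with hy | hy
    · rw [gammaPDF_of_neg hy, gammaPDF_of_neg hy, zero_mul, mul_zero]
    · rw [gammaPDF_of_nonneg hy, gammaPDF_of_nonneg hy,
        ← ENNReal.ofReal_mul (by positivity), ← ENNReal.ofReal_mul (by positivity)]
      congr 1
      rw [one_rpow, show (-((1 + t) * y)) = -(1*y) + -(t*y) by ring, Real.exp_add,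
        Real.rpow_neg h1t.le]
      have hG : Real.Gamma a ≠ 0 := (Real.Gamma_pos_of_pos ha).ne'
      have hP : ((1:ℝ) + t) ^ a ≠ 0 := (Real.rpow_pos_of_pos h1t a).ne'
      field_simp
  simp only [key]
  have hm2 : Measurable (gammaPDF a (1 + t)) := (measurable_gammaPDFReal a (1+t)).ennreal_ofReal
  rw [lintegral_const_mul _ hm2, lintegral_gammaPDF_eq_one ha h1t, mul_one]

/-- the joint survival function of `(X_1,…,X_n)` in the `Pa^c(σ,γ)` model is
`∏_j (1 + ∑_i (c_{i,j}/σ_i) x_i)^{-γ_j}`. -/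
theorem multivariate_pareto_survival
    (n : ℕ) (hn : 1 ≤ n)
    (σ : Fin n → ℝ) (hσ : ∀ i, 0 < σ i)
    (γ : Fin (n + 1) → ℝ) (hγ : ∀ j, 0 < γ j)
    (c : Fin n → Fin (n + 1) → ℝ) (hc : ∀ i j, c i j = 0 ∨ c i j = 1)
    (hrow : ∀ i, ∃ j, c i j = 1)
    (x : Fin n → ℝ) (hx : ∀ i, 0 ≤ x i) :
    paretoModelMeasure n γ {p | ∀ i, x i < paretoCoord n σ c i p}
      = ENNReal.ofReal (∏ j, (1 + ∑ i, (c i j / σ i) * x i) ^ (-(γ j))) := by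
  haveI hP : ∀ j : Fin (n+1), IsProbabilityMeasure (gammaMeasure (γ j) 1) :=
    fun j => isProbabilityMeasure_gammaMeasure (hγ j) one_pos
  haveI : IsProbabilityMeasure (gammaMeasure (1:ℝ) 1) := isProbabilityMeasure_gammaMeasure one_pos one_pos
  haveI hSF : ∀ j : Fin (n+1), SigmaFinite (gammaMeasure (γ j) 1) :=
    fun j => haveI := hP j; inferInstance
  set t : Fin (n+1) → ℝ := fun j => ∑ i, (c i j / σ i) * x i with ht_def
  have hcnn : ∀ i j, 0 ≤ c i j := fun i j => by rcases hc i j with h | h <;> simp [h]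
  have ht : ∀ j, 0 ≤ t j := fun j =>
    Finset.sum_nonneg fun i _ => mul_nonneg (div_nonneg (hcnn i j) (hσ i).le) (hx i)
  have hcoord : ∀ i, Measurable (paretoCoord n σ c i) := fun i =>
    (measurable_const.mul ((measurable_pi_apply i).comp measurable_fst)).div
      (Finset.measurable_sum _ fun j _ =>
        measurable_const.mul ((measurable_pi_apply j).comp measurable_snd))
  have hA : MeasurableSet {p : (Fin n → ℝ) × (Fin (n+1) → ℝ) |
      ∀ i, x i < paretoCoord n σ c i p} := by
    rw [setOf_forall]
    exact MeasurableSet.iInter fun i => measurableSet_lt measurable_const (hcoord i)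
  have hae : ∀ᵐ y ∂(Measure.pi fun j => gammaMeasure (γ j) 1), ∀ j, 0 < y j := by
    rw [ae_all_iff]
    intro j
    rw [ae_iff]
    have he : {y : Fin (n+1) → ℝ | ¬ 0 < y j} = Function.eval j ⁻¹' (Iic 0) := by
      ext y; simp [not_lt]
    rw [he]
    exact Measure.pi_eval_preimage_null (μ := fun j => gammaMeasure (γ j) 1) (i := j)
      (gammaMeasure_Iic_zero _ _)
  have hS : ∀ y : Fin (n+1) → ℝ, (∀ j, 0 < y j) → ∀ i, 0 < ∑ j, c i j * y j := by
    intro y hy i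
    obtain ⟨j, hj⟩ := hrow i
    refine Finset.sum_pos' (fun k _ => mul_nonneg (hcnn i k) (hy k).le)
      ⟨j, Finset.mem_univ j, ?_⟩
    rw [hj, one_mul]; exact hy j
  have hinner : ∀ y : Fin (n+1) → ℝ, (∀ j, 0 < y j) →
      (Measure.pi fun _ : Fin n => gammaMeasure 1 1)
        ((fun l => (l, y)) ⁻¹' {p | ∀ i, x i < paretoCoord n σ c i p})
        = ∏ j, ENNReal.ofReal (exp (-(t j * y j))) := by
    intro y hy
    have hSy := hS y hy
    have hpre : ((fun l => (l, y)) ⁻¹' {p : (Fin n → ℝ) × (Fin (n+1) → ℝ) |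
        ∀ i, x i < paretoCoord n σ c i p})
        = Set.pi Set.univ (fun i => Ioi (x i * (∑ j, c i j * y j) / σ i)) := by
      ext l
      simp only [mem_preimage, mem_setOf_eq, Set.mem_pi, mem_univ, true_implies, mem_Ioi,
        paretoCoord]
      refine forall_congr' fun i => ?_
      rw [lt_div_iff₀ (hSy i), div_lt_iff₀ (hσ i), mul_comm (σ i) (l i)]
    have hb : ∀ i, 0 ≤ x i * (∑ j, c i j * y j) / σ i :=
      fun i => div_nonneg (mul_nonneg (hx i) (hSy i).le) (hσ i).le
    have hsum : ∑ i, x i * (∑ j, c i j * y j) / σ i = ∑ j, t j * y j := by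
      calc ∑ i, x i * (∑ j, c i j * y j) / σ i
          = ∑ i, ∑ j, (c i j / σ i * x i) * y j := by
            refine Finset.sum_congr rfl fun i _ => ?_
            rw [Finset.mul_sum, Finset.sum_div]
            exact Finset.sum_congr rfl fun j _ => by ring
        _ = ∑ j, t j * y j := by
            rw [Finset.sum_comm]
            exact Finset.sum_congr rfl fun j _ => (Finset.sum_mul _ _ _).symm
    rw [hpre, Measure.pi_pi]
    calc ∏ i, gammaMeasure 1 1 (Ioi (x i * (∑ j, c i j * y j) / σ i))
        = ∏ i, ENNReal.ofReal (exp (-(x i * (∑ j, c i j * y j) / σ i))) :=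
          Finset.prod_congr rfl fun i _ => gammaMeasure_one_one_Ioi (hb i)
      _ = ENNReal.ofReal (∏ i, exp (-(x i * (∑ j, c i j * y j) / σ i))) :=
          (ENNReal.ofReal_prod_of_nonneg fun i _ => (exp_pos _).le).symm
      _ = ENNReal.ofReal (exp (∑ i, -(x i * (∑ j, c i j * y j) / σ i))) := by
          rw [Real.exp_sum]
      _ = ENNReal.ofReal (exp (∑ j, -(t j * y j))) := by
          congr 1
          rw [Finset.sum_neg_distrib, Finset.sum_neg_distrib, hsum]
      _ = ENNReal.ofReal (∏ j, exp (-(t j * y j))) := by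
          rw [Real.exp_sum]
      _ = ∏ j, ENNReal.ofReal (exp (-(t j * y j))) :=
          ENNReal.ofReal_prod_of_nonneg fun j _ => (exp_pos _).le
  rw [paretoModelMeasure, Measure.prod_apply_symm hA,
    lintegral_congr_ae (hae.mono fun y hy => hinner y hy),
    lintegral_pi_fin_prod _ (fun j => gammaMeasure (γ j) 1) (fun j => hSF j)
      (fun j s => ENNReal.ofReal (exp (-(t j * s)))) (fun j => by fun_prop),
    Finset.prod_congr rfl (fun j _ => gamma_laplace (hγ j) (ht j)),
    ← ENNReal.ofReal_prod_of_nonneg]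
  exact fun j _ => Real.rpow_nonneg (by linarith [ht j]) _
end

section
/- In the Pa^c(σ,γ) model, assume additionally that every column of c is nonzero, and set β_j = ∑_{i=1}^n c_{i,j}/σ_i > 0 for j = 1,…,n+1. Let ρ be the pushforward under the map z ↦ ∑_{j=1}^{n+1} z_j of the product measure ⊗_{j=1}^{n+1} Gamma(γ_j, 1/β_j) (so ρ is the law of a sum of n+1 independent gamma random variables with shapes γ_j and rates 1/β_j). Then for every x ≥ 0, the survival function of the minimum X_− = min_{1≤i≤n} X_i admits the exponential-mixture representation ν{min_{1≤i≤n} X_i > x} = ∫_{(0,∞)} e^{−λx} dρ(λ) = ∏_{j=1}^{n+1} (1 + β_j·x)^{−γ_j}. -/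
open MeasureTheory ProbabilityTheory Real

section Aux

open Set

lemma gamma_lintegral_exp {a r t : ℝ} (ha : 0 < a) (hr : 0 < r) (ht : 0 ≤ t) :
    ∫⁻ y, ENNReal.ofReal (Real.exp (-(t * y))) ∂(gammaMeasure a r)
      = ENNReal.ofReal ((1 + t / r) ^ (-a)) := by
  have hrt : 0 < r + t := by linarith
  have hbase : (0:ℝ) < 1 + t / r := by positivity
  have key : ∀ y : ℝ, gammaPDF a r y * ENNReal.ofReal (Real.exp (-(t * y)))
      = ENNReal.ofReal ((1 + t / r) ^ (-a)) * gammaPDF a (r + t) y := by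
    intro y
    rcases lt_or_ge y 0 with hy | hy
    · rw [gammaPDF_of_neg hy, gammaPDF_of_neg hy, zero_mul, mul_zero]
    · rw [gammaPDF_of_nonneg hy, gammaPDF_of_nonneg hy,
        ← ENNReal.ofReal_mul (by positivity), ← ENNReal.ofReal_mul (by positivity)]
      congr 1
      have e1 : (1 + t / r) ^ (-a) * (r + t) ^ a = r ^ a := by
        have h1 : (1 + t / r : ℝ) = (r + t) / r := by field_simp
        rw [h1, Real.rpow_neg (by positivity), Real.div_rpow hrt.le hr.le]
        rw [inv_div]
        field_simp
      have e2 : Real.exp (-(r * y)) * Real.exp (-(t * y)) = Real.exp (-((r + t) * y)) := by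
        rw [← Real.exp_add]; ring_nf
      calc r ^ a / Gamma a * y ^ (a - 1) * Real.exp (-(r * y)) * Real.exp (-(t * y))
          = ((1 + t / r) ^ (-a) * (r + t) ^ a) / Gamma a * y ^ (a - 1)
            * (Real.exp (-(r * y)) * Real.exp (-(t * y))) := by rw [e1]; ring
        _ = (1 + t / r) ^ (-a) * ((r + t) ^ a / Gamma a * y ^ (a - 1) * Real.exp (-((r + t) * y))) := by
            rw [e2]; ring
  have hg : Measurable fun y : ℝ => ENNReal.ofReal (Real.exp (-(t * y))) := by fun_prop
  have hpdf : Measurable (gammaPDF a r) := (measurable_gammaPDFReal a r).ennreal_ofReal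
  rw [gammaMeasure, lintegral_withDensity_eq_lintegral_mul _ hpdf hg]
  simp only [Pi.mul_apply]
  calc ∫⁻ y, gammaPDF a r y * ENNReal.ofReal (Real.exp (-(t * y)))
      = ∫⁻ y, ENNReal.ofReal ((1 + t / r) ^ (-a)) * gammaPDF a (r + t) y := by
        exact lintegral_congr key
    _ = ENNReal.ofReal ((1 + t / r) ^ (-a)) := by
        have hpdf2 : Measurable (gammaPDF a (r + t)) :=
          (measurable_gammaPDFReal a (r + t)).ennreal_ofReal
        rw [lintegral_const_mul _ hpdf2, lintegral_gammaPDF_eq_one ha hrt, mul_one]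

lemma gamma_integral_exp {a r t : ℝ} (ha : 0 < a) (hr : 0 < r) (ht : 0 ≤ t) :
    ∫ y, Real.exp (-(t * y)) ∂(gammaMeasure a r) = (1 + t / r) ^ (-a) := by
  rw [integral_eq_lintegral_of_nonneg_ae (ae_of_all _ fun y => (Real.exp_pos _).le)
    (Continuous.aestronglyMeasurable (by fun_prop))]
  rw [gamma_lintegral_exp ha hr ht, ENNReal.toReal_ofReal (by positivity)]

lemma gamma_exp_Ioi {t : ℝ} (ht : 0 ≤ t) :
    gammaMeasure 1 1 (Ioi t) = ENNReal.ofReal (Real.exp (-t)) := by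
  rw [gammaMeasure, withDensity_apply _ measurableSet_Ioi]
  have : ∫⁻ y in Ioi t, gammaPDF 1 1 y = ∫⁻ y in Ioi t, ENNReal.ofReal (Real.exp (-y)) := by
    refine setLIntegral_congr_fun measurableSet_Ioi (fun y hy => ?_)
    have hy0 : (0:ℝ) ≤ y := le_of_lt (lt_of_le_of_lt ht hy)
    rw [gammaPDF_of_nonneg hy0]
    norm_num [Real.Gamma_one, Real.rpow_zero]
  rw [this, ← ofReal_integral_eq_lintegral_ofReal
    (by simpa [IntegrableOn] using exp_neg_integrableOn_Ioi t one_pos)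
    (ae_of_all _ fun y => (Real.exp_pos _).le), integral_exp_neg_Ioi]

lemma gamma_ae_pos {a r : ℝ} : ∀ᵐ y ∂(gammaMeasure a r), 0 < y := by
  rw [ae_iff]
  have : {y : ℝ | ¬ 0 < y} = Iic 0 := by ext y; simp
  rw [this, gammaMeasure, withDensity_apply _ measurableSet_Iic,
    ← setLIntegral_congr Iio_ae_eq_Iic, lintegral_gammaPDF_of_nonpos le_rfl]

def RealWith (_ : Measure ℝ) : Type := ℝ

lemma integral_pi_prod {m : ℕ} (μ : Fin m → Measure ℝ) [h : ∀ i, SigmaFinite (μ i)]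
    (f : Fin m → ℝ → ℝ) :
    ∫ z : Fin m → ℝ, ∏ i, f i (z i) ∂Measure.pi μ = ∏ i, ∫ y, f i y ∂μ i := by
  letI inst : ∀ i : Fin m, MeasureSpace (RealWith (μ i)) :=
    fun i => @MeasureSpace.mk (RealWith (μ i)) Real.measurableSpace (μ i)
  letI : ∀ i : Fin m, SigmaFinite (volume : Measure (RealWith (μ i))) := fun i => h i
  exact MeasureTheory.integral_fintype_prod_eq_prod (E := fun i => RealWith (μ i)) f

end Aux

/-- the survival function of the minimum `X_- = min_i X_i` is the Laplace
transform of the law `ρ` of a sum of `n+1` independent gammas with shapes `γ_j` and rates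
`1/β_j`, and equals `∏_j (1 + β_j x)^{-γ_j}`. -/
theorem minimum_exponential_mixture
    (n : ℕ) (hn : 1 ≤ n)
    (σ : Fin n → ℝ) (hσ : ∀ i, 0 < σ i)
    (γ : Fin (n + 1) → ℝ) (hγ : ∀ j, 0 < γ j)
    (c : Fin n → Fin (n + 1) → ℝ) (hc : ∀ i j, c i j = 0 ∨ c i j = 1)
    (hrow : ∀ i, ∃ j, c i j = 1) (hcol : ∀ j, ∃ i, c i j = 1)
    (β : Fin (n + 1) → ℝ) (hβ : ∀ j, β j = ∑ i, c i j / σ i)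
    (ρ : Measure ℝ)
    (hρ : ρ = Measure.map (fun z : Fin (n + 1) → ℝ => ∑ j, z j)
        (Measure.pi fun j => gammaMeasure (γ j) (1 / β j)))
    (x : ℝ) (hx : 0 ≤ x) :
    paretoModelMeasure n γ {p | ∀ i, x < paretoCoord n σ c i p}
        = ENNReal.ofReal (∫ l in Set.Ioi (0 : ℝ), Real.exp (-(l * x)) ∂ρ)
      ∧ ∫ l in Set.Ioi (0 : ℝ), Real.exp (-(l * x)) ∂ρ
          = ∏ j, (1 + β j * x) ^ (-(γ j)) := by
  have hcnn : ∀ i j, 0 ≤ c i j := fun i j => by rcases hc i j with h | h <;> simp [h]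
  have hβpos : ∀ j, 0 < β j := by
    intro j
    rw [hβ j]
    obtain ⟨i, hi⟩ := hcol j
    refine Finset.sum_pos' (fun k _ => div_nonneg (hcnn k j) (hσ k).le)
      ⟨i, Finset.mem_univ i, ?_⟩
    rw [hi]
    exact div_pos one_pos (hσ i)
  haveI hP1 : IsProbabilityMeasure (gammaMeasure (1:ℝ) 1) :=
    isProbabilityMeasure_gammaMeasure one_pos one_pos
  haveI hPg : ∀ j, IsProbabilityMeasure (gammaMeasure (γ j) 1) :=
    fun j => isProbabilityMeasure_gammaMeasure (hγ j) one_pos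
  haveI hPg' : ∀ j, IsProbabilityMeasure (gammaMeasure (γ j) (1 / β j)) :=
    fun j => isProbabilityMeasure_gammaMeasure (hγ j) (one_div_pos.mpr (hβpos j))
  have hmapm : Measurable (fun z : Fin (n+1) → ℝ => ∑ j, z j) := by fun_prop
  -- the second conjunct
  have hprod2 : ∫ l in Set.Ioi (0:ℝ), Real.exp (-(l * x)) ∂ρ
      = ∏ j, (1 + β j * x) ^ (-(γ j)) := by
    have haeρ : ∀ᵐ l ∂ρ, l ∈ Set.Ioi (0:ℝ) := by
      rw [hρ]
      refine (ae_map_iff hmapm.aemeasurable measurableSet_Ioi).mpr ?_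
      have hz : ∀ᵐ z ∂(Measure.pi fun j => gammaMeasure (γ j) (1 / β j)), ∀ j, 0 < z j :=
        ae_all_iff.2 fun j => Measure.tendsto_eval_ae_ae.eventually gamma_ae_pos
      filter_upwards [hz] with z hzpos
      exact Finset.sum_pos (fun j _ => hzpos j) Finset.univ_nonempty
    rw [Measure.restrict_eq_self_of_ae_mem haeρ, hρ,
      integral_map hmapm.aemeasurable (Continuous.aestronglyMeasurable (by fun_prop))]
    have hpt : ∀ z : Fin (n+1) → ℝ,
        Real.exp (-((∑ j, z j) * x)) = ∏ j, Real.exp (-(x * z j)) := by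
      intro z
      rw [← Real.exp_sum]
      congr 1
      rw [Finset.sum_neg_distrib, Finset.sum_mul]
      exact neg_inj.mpr (Finset.sum_congr rfl fun j _ => mul_comm _ _)
    simp_rw [hpt]
    have H : ∫ z : Fin (n+1) → ℝ, ∏ j, Real.exp (-(x * z j))
          ∂(Measure.pi fun j => gammaMeasure (γ j) (1 / β j))
        = ∏ j, ∫ t, Real.exp (-(x * t)) ∂gammaMeasure (γ j) (1 / β j) :=
      integral_pi_prod _ (fun j t => Real.exp (-(x * t)))
    rw [H]
    refine Finset.prod_congr rfl fun j _ => ?_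
    rw [gamma_integral_exp (hγ j) (one_div_pos.mpr (hβpos j)) hx, one_div, div_inv_eq_mul,
      mul_comm x (β j)]
  refine ⟨?_, hprod2⟩
  rw [hprod2]
  -- the first conjunct
  have hXm : ∀ i, Measurable fun p : (Fin n → ℝ) × (Fin (n+1) → ℝ) => paretoCoord n σ c i p := by
    intro i
    unfold paretoCoord
    fun_prop
  have hSmeas : MeasurableSet
      {p : (Fin n → ℝ) × (Fin (n+1) → ℝ) | ∀ i, x < paretoCoord n σ c i p} := by
    rw [Set.setOf_forall]
    exact MeasurableSet.iInter fun i => measurableSet_lt measurable_const (hXm i)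
  have hyae : ∀ᵐ y ∂(Measure.pi fun j => gammaMeasure (γ j) 1), ∀ j, 0 < y j :=
    ae_all_iff.2 fun j => Measure.tendsto_eval_ae_ae.eventually gamma_ae_pos
  rw [paretoModelMeasure, Measure.prod_apply_symm hSmeas]
  have hinner : ∀ᵐ y ∂(Measure.pi fun j => gammaMeasure (γ j) 1),
      (Measure.pi fun _ : Fin n => gammaMeasure 1 1)
        ((fun l => (l, y)) ⁻¹' {p | ∀ i, x < paretoCoord n σ c i p})
      = ENNReal.ofReal (Real.exp (-(x * ∑ j, β j * y j))) := by
    filter_upwards [hyae] with y hy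
    have hD : ∀ i, 0 < ∑ j, c i j * y j := by
      intro i
      obtain ⟨j0, hj0⟩ := hrow i
      refine Finset.sum_pos' (fun j _ => mul_nonneg (hcnn i j) (hy j).le)
        ⟨j0, Finset.mem_univ j0, ?_⟩
      rw [hj0, one_mul]
      exact hy j0
    have hset : ((fun l => (l, y)) ⁻¹' {p | ∀ i, x < paretoCoord n σ c i p})
        = Set.pi Set.univ fun i => Set.Ioi (x * (∑ j, c i j * y j) / σ i) := by
      ext l
      simp only [Set.mem_preimage, Set.mem_setOf_eq, Set.mem_pi, Set.mem_univ,
        true_implies, Set.mem_Ioi, paretoCoord]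
      refine forall_congr' fun i => ?_
      rw [lt_div_iff₀ (hD i), div_lt_iff₀ (hσ i), mul_comm (σ i) (l i)]
    rw [hset, Measure.pi_pi]
    have hfac : ∀ i : Fin n, gammaMeasure 1 1 (Set.Ioi (x * (∑ j, c i j * y j) / σ i))
        = ENNReal.ofReal (Real.exp (-(x * (∑ j, c i j * y j) / σ i))) := fun i =>
      gamma_exp_Ioi (div_nonneg (mul_nonneg hx (hD i).le) (hσ i).le)
    simp_rw [hfac]
    rw [← ENNReal.ofReal_prod_of_nonneg (fun i _ => (Real.exp_pos _).le)]
    congr 1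
    rw [← Real.exp_sum]
    congr 1
    rw [Finset.sum_neg_distrib]
    congr 1
    calc ∑ i, x * (∑ j, c i j * y j) / σ i
        = ∑ i, ∑ j, x * (c i j * y j) / σ i := by
          refine Finset.sum_congr rfl fun i _ => ?_
          rw [Finset.mul_sum, Finset.sum_div]
      _ = ∑ j, ∑ i, x * (c i j * y j) / σ i := Finset.sum_comm
      _ = ∑ j, x * (β j * y j) := by
          refine Finset.sum_congr rfl fun j _ => ?_
          rw [hβ, Finset.sum_mul, Finset.mul_sum]
          exact Finset.sum_congr rfl fun i _ => by ring
      _ = x * ∑ j, β j * y j := (Finset.mul_sum _ _ _).symm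
  rw [lintegral_congr_ae hinner]
  have hint : Integrable (fun y : Fin (n+1) → ℝ => Real.exp (-(x * ∑ j, β j * y j)))
      (Measure.pi fun j => gammaMeasure (γ j) 1) := by
    refine Integrable.mono' (integrable_const 1)
      (Continuous.aestronglyMeasurable (by fun_prop)) ?_
    filter_upwards [hyae] with y hy
    rw [Real.norm_eq_abs, abs_of_pos (Real.exp_pos _)]
    refine Real.exp_le_one_iff.mpr ?_
    exact neg_nonpos.mpr (mul_nonneg hx (Finset.sum_nonneg fun j _ =>
      mul_nonneg (hβpos j).le (hy j).le))
  rw [← ofReal_integral_eq_lintegral_ofReal hint (ae_of_all _ fun y => (Real.exp_pos _).le)]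
  congr 1
  have hpt : ∀ y : Fin (n+1) → ℝ, Real.exp (-(x * ∑ j, β j * y j))
      = ∏ j, Real.exp (-((x * β j) * y j)) := by
    intro z
    rw [← Real.exp_sum]
    congr 1
    rw [Finset.sum_neg_distrib, Finset.mul_sum]
    congr 1
    exact Finset.sum_congr rfl fun j _ => by ring
  simp_rw [hpt]
  have H : ∫ z : Fin (n+1) → ℝ, ∏ j, Real.exp (-(x * β j * z j))
        ∂(Measure.pi fun j => gammaMeasure (γ j) 1)
      = ∏ j, ∫ t, Real.exp (-(x * β j * t)) ∂gammaMeasure (γ j) 1 :=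
    integral_pi_prod _ (fun j t => Real.exp (-(x * β j * t)))
  rw [H]
  refine Finset.prod_congr rfl fun j _ => ?_
  rw [gamma_integral_exp (hγ j) one_pos (mul_nonneg hx (hβpos j).le), div_one,
    mul_comm x (β j)]
end

section
/- (Minima-based multiple risk factor representation.) Let ν' = (⊗_{(i,j) ∈ {1,…,n}×{1,…,n+1}} Exp(1)) ⊗ (⊗_{j=1}^{n+1} Gamma(γ_j,1)) be the product probability measure on pairs (u, λ) with u ∈ ({1,…,n}×{1,…,n+1} → ℝ) and λ ∈ ({1,…,n+1} → ℝ), and define X_i(u,λ) = σ_i · min{ u_{i,j}/λ_j : 1 ≤ j ≤ n+1, c_{i,j} = 1 } for i = 1,…,n (so that, conditionally on λ, the u_{i,j}/λ_j are independent exponentials with rates λ_j). Then for every x = (x_1,…,x_n) with all x_i ≥ 0, ν'{(u,λ) : X_i(u,λ) > x_i for all i} = ∏_{j=1}^{n+1} (1 + ∑_{i=1}^n (c_{i,j}/σ_i)·x_i)^{−γ_j}, i.e. (X_1,…,X_n) has the multivariate Pareto Pa^c(σ,γ) distribution. -/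
open MeasureTheory ProbabilityTheory Real
open scoped ENNReal

lemma aux_gamma11_Ioi {t : ℝ} (ht : 0 ≤ t) :
    gammaMeasure 1 1 (Set.Ioi t) = ENNReal.ofReal (exp (-t)) := by
  rw [gammaMeasure, withDensity_apply _ measurableSet_Ioi]
  rw [setLIntegral_congr_fun_ae measurableSet_Ioi
    (ae_of_all _ (fun y (hy : t < y) => show gammaPDF 1 1 y = ENNReal.ofReal (exp (-y)) by
      rw [gammaPDF_of_nonneg (le_trans ht hy.le)]
      norm_num [Real.Gamma_one]))]
  rw [← ofReal_integral_eq_lintegral_ofReal]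
  · rw [integral_exp_neg_Ioi]
  · have := exp_neg_integrableOn_Ioi t (one_pos (α := ℝ))
    simpa using this.integrable
  · exact ae_of_all _ fun y => (exp_pos _).le

lemma aux_gamma_nonpos_null {a : ℝ} : gammaMeasure a 1 (Set.Iic 0) = 0 := by
  rw [gammaMeasure, withDensity_apply _ measurableSet_Iic,
    setLIntegral_congr Iio_ae_eq_Iic.symm, lintegral_gammaPDF_of_nonpos le_rfl]

lemma aux_gamma_laplace {a s : ℝ} (ha : 0 < a) (hs : 0 ≤ s) :
    ∫⁻ y, ENNReal.ofReal (exp (-(s * y))) ∂(gammaMeasure a 1)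
      = ENNReal.ofReal ((1 + s) ^ (-a)) := by
  have h1s : (0:ℝ) < 1 + s := by linarith
  have hg : Measurable fun y : ℝ => ENNReal.ofReal (exp (-(s * y))) := by
    exact (Real.measurable_exp.comp ((measurable_const.mul measurable_id).neg)).ennreal_ofReal
  rw [gammaMeasure, lintegral_withDensity_eq_lintegral_mul _
    (show Measurable (gammaPDF a 1) from (measurable_gammaPDFReal a 1).ennreal_ofReal) hg]
  have hpt : ∀ y : ℝ, (gammaPDF a 1 * fun y => ENNReal.ofReal (exp (-(s * y)))) y
      = ENNReal.ofReal ((1 + s) ^ (-a)) * gammaPDF a (1 + s) y := by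
    intro y
    have key : (1 + s) ^ (-a) * (1 + s) ^ a = 1 := by
      rw [← rpow_add h1s]; simp
    simp only [Pi.mul_apply, gammaPDF,
      ← ENNReal.ofReal_mul (gammaPDFReal_nonneg ha one_pos y),
      ← ENNReal.ofReal_mul (rpow_nonneg h1s.le (-a))]
    congr 1
    unfold gammaPDFReal
    split_ifs with hy
    · rw [one_rpow]
      have hexp : rexp (-(1 * y)) * rexp (-(s * y)) = rexp (-((1 + s) * y)) := by
        rw [← Real.exp_add]; ring_nf
      calc 1 / Gamma a * y ^ (a - 1) * rexp (-(1 * y)) * rexp (-(s * y))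
          = 1 / Gamma a * y ^ (a - 1) * (rexp (-(1 * y)) * rexp (-(s * y))) := by ring
        _ = 1 / Gamma a * y ^ (a - 1) * rexp (-((1 + s) * y)) := by rw [hexp]
        _ = ((1 + s) ^ (-a) * (1 + s) ^ a)
            * (1 / Gamma a * y ^ (a - 1) * rexp (-((1 + s) * y))) := by rw [key, one_mul]
        _ = (1 + s) ^ (-a) * ((1 + s) ^ a / Gamma a * y ^ (a - 1) * rexp (-((1 + s) * y))) := by
            ring
    · simp
  simp_rw [hpt]
  rw [lintegral_const_mul _ (show Measurable (gammaPDF a (1 + s)) from (measurable_gammaPDFReal a (1 + s)).ennreal_ofReal),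
    lintegral_gammaPDF_eq_one ha h1s, mul_one]

lemma aux_lintegral_pi_prod {m : ℕ} (μ : Fin m → Measure ℝ)
    [∀ i, IsProbabilityMeasure (μ i)] (f : Fin m → ℝ → ℝ≥0∞) (hf : ∀ i, Measurable (f i)) :
    ∫⁻ l, ∏ i, f i (l i) ∂(Measure.pi μ) = ∏ i, ∫⁻ y, f i y ∂(μ i) := by
  induction m with
  | zero =>
      simp only [Finset.univ_eq_empty, Finset.prod_empty, lintegral_const, one_mul]
      exact measure_univ
  | succ m ih =>
      have hF : Measurable fun l : Fin (m + 1) → ℝ => ∏ i, f i (l i) :=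
        Finset.measurable_prod _ fun i _ => (hf i).comp (measurable_pi_apply i)
      rw [← ((measurePreserving_piFinSuccAbove μ 0).symm (MeasurableEquiv.piFinSuccAbove (fun _ => ℝ) 0)).map_eq,
        lintegral_map hF (MeasurableEquiv.measurable _)]
      simp_rw [MeasurableEquiv.piFinSuccAbove_symm_apply, Fin.insertNthEquiv,
        Fin.prod_univ_succ, Fin.insertNth_zero]
      simp only [Fin.zero_succAbove, Equiv.coe_fn_mk, Function.comp_def, Fin.cons_zero,
        Fin.cons_succ, cast_eq]
      have hg : Measurable fun p : Fin m → ℝ => ∏ i : Fin m, f i.succ (p i) :=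
        Finset.measurable_prod _ fun i _ => (hf i.succ).comp (measurable_pi_apply i)
      rw [lintegral_prod_mul (hf 0).aemeasurable hg.aemeasurable, ih _ _ fun i => hf i.succ]

/-- minima-based multiple risk factor representation: with
`u_{i,j} ~ Exp(1)` i.i.d. and `λ_j ~ Gamma(γ_j,1)` independent, the vector
`X_i = σ_i · min{u_{i,j}/λ_j : c_{i,j} = 1}` has the multivariate Pareto `Pa^c(σ,γ)`
survival function `∏_j (1 + ∑_i (c_{i,j}/σ_i) x_i)^{-γ_j}`. -/
theorem minima_common_shock_representation
    (n : ℕ) (hn : 1 ≤ n)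
    (σ : Fin n → ℝ) (hσ : ∀ i, 0 < σ i)
    (γ : Fin (n + 1) → ℝ) (hγ : ∀ j, 0 < γ j)
    (c : Fin n → Fin (n + 1) → ℝ) (hc : ∀ i j, c i j = 0 ∨ c i j = 1)
    (hrow : ∀ i, ∃ j, c i j = 1)
    (ν' : Measure ((Fin n × Fin (n + 1) → ℝ) × (Fin (n + 1) → ℝ)))
    (hν' : ν' = (Measure.pi fun _ : Fin n × Fin (n + 1) => gammaMeasure 1 1).prod
        (Measure.pi fun j => gammaMeasure (γ j) 1))
    (X : Fin n → (Fin n × Fin (n + 1) → ℝ) × (Fin (n + 1) → ℝ) → ℝ)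
    (hX : ∀ i p, X i p
      = σ i * sInf ((fun j => p.1 (i, j) / p.2 j) '' {j | c i j = 1}))
    (x : Fin n → ℝ) (hx : ∀ i, 0 ≤ x i) :
    ν' {p | ∀ i, x i < X i p}
      = ENNReal.ofReal (∏ j, (1 + ∑ i, (c i j / σ i) * x i) ^ (-(γ j))) := by
  haveI instG : ∀ j : Fin (n + 1), IsProbabilityMeasure (gammaMeasure (γ j) 1) :=
    fun j => isProbabilityMeasure_gammaMeasure (hγ j) one_pos
  haveI instE : IsProbabilityMeasure (gammaMeasure 1 1) :=
    isProbabilityMeasure_gammaMeasure one_pos one_pos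
  subst hν'
  set μu : Measure (Fin n × Fin (n + 1) → ℝ) :=
    Measure.pi fun _ : Fin n × Fin (n + 1) => gammaMeasure 1 1 with hμu
  set μl : Measure (Fin (n + 1) → ℝ) := Measure.pi fun j => gammaMeasure (γ j) 1 with hμl
  set s : Fin (n + 1) → ℝ := fun j => ∑ i, (c i j / σ i) * x i with hsdef
  have hs0 : ∀ j, 0 ≤ s j := fun j => Finset.sum_nonneg fun i _ =>
    mul_nonneg (div_nonneg (by rcases hc i j with h | h <;> simp [h]) (hσ i).le) (hx i)
  set T : Set ((Fin n × Fin (n + 1) → ℝ) × (Fin (n + 1) → ℝ)) :=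
    {p | (∀ j, 0 < p.2 j) ∧ ∀ i j, c i j = 1 → (x i / σ i) * p.2 j < p.1 (i, j)} with hTdef
  -- T is measurable
  have hTm : MeasurableSet T := by
    have h1 : MeasurableSet {p : (Fin n × Fin (n + 1) → ℝ) × (Fin (n + 1) → ℝ) |
        ∀ j, 0 < p.2 j} := by
      rw [Set.setOf_forall]
      exact MeasurableSet.iInter fun j =>
        measurableSet_lt measurable_const (by fun_prop)
    have h2 : MeasurableSet {p : (Fin n × Fin (n + 1) → ℝ) × (Fin (n + 1) → ℝ) |
        ∀ i j, c i j = 1 → (x i / σ i) * p.2 j < p.1 (i, j)} := by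
      rw [Set.setOf_forall]
      refine MeasurableSet.iInter fun i => ?_
      rw [Set.setOf_forall]
      refine MeasurableSet.iInter fun j => ?_
      by_cases hcij : c i j = 1
      · simp only [hcij, forall_const]
        exact measurableSet_lt (by fun_prop) (by fun_prop)
      · simp only [hcij, false_implies]
        · simp [hcij]
    rw [hTdef, Set.setOf_and]
    exact h1.inter h2
  -- the set of l with some nonpositive coordinate is null
  have hBnull : μl {l | ¬ ∀ j, 0 < l j} = 0 := by
    refine measure_mono_null (fun l hl => ?_) (measure_iUnion_null (s := fun j =>
      (fun l : Fin (n + 1) → ℝ => l j) ⁻¹' Set.Iic 0) fun j => ?_)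
    · push_neg at hl
      obtain ⟨j, hj⟩ := hl
      exact Set.mem_iUnion.mpr ⟨j, by simpa using hj⟩
    · show μl ((fun l : Fin (n + 1) → ℝ => l j) ⁻¹' Set.Iic 0) = 0
      have hset : (fun l : Fin (n + 1) → ℝ => l j) ⁻¹' Set.Iic 0
          = Set.pi Set.univ (fun k => if k = j then Set.Iic 0 else Set.univ) := by
        ext l
        simp only [Set.mem_preimage, Set.mem_pi, Set.mem_univ, forall_true_left]
        constructor
        · intro h k
          by_cases hk : k = j
          · subst hk; simpa using h
          · simp [hk]
        · intro h
          have := h j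
          simpa using this
      rw [hset, hμl, Measure.pi_pi]
      refine Finset.prod_eq_zero (Finset.mem_univ j) ?_
      simp [aux_gamma_nonpos_null]
  have hνN : (μu.prod μl) {p : (Fin n × Fin (n + 1) → ℝ) × (Fin (n + 1) → ℝ) |
      ¬ ∀ j, 0 < p.2 j} = 0 := by
    have hset : {p : (Fin n × Fin (n + 1) → ℝ) × (Fin (n + 1) → ℝ) | ¬ ∀ j, 0 < p.2 j}
        = Set.univ ×ˢ {l | ¬ ∀ j, 0 < l j} := by
      ext p; simp [Set.mem_prod]
    rw [hset, Measure.prod_prod, hBnull, mul_zero]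
  -- key pointwise equivalence
  have key : ∀ p : (Fin n × Fin (n + 1) → ℝ) × (Fin (n + 1) → ℝ), (∀ j, 0 < p.2 j) →
      ((∀ i, x i < X i p) ↔ p ∈ T) := by
    intro p hp
    have hiff : ∀ i, (x i < X i p ↔ ∀ j, c i j = 1 → (x i / σ i) * p.2 j < p.1 (i, j)) := by
      intro i
      rw [hX i p]
      have hne : ((fun j => p.1 (i, j) / p.2 j) '' {j | c i j = 1}).Nonempty :=
        ⟨_, Set.mem_image_of_mem _ (show (hrow i).choose ∈ {j | c i j = 1} from
          (hrow i).choose_spec)⟩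
      have hfin : ((fun j => p.1 (i, j) / p.2 j) '' {j | c i j = 1}).Finite := Set.toFinite _
      constructor
      · intro h j hcij
        have h1 : x i / σ i < sInf ((fun j => p.1 (i, j) / p.2 j) '' {j | c i j = 1}) := by
          rw [div_lt_iff₀ (hσ i), mul_comm]; exact h
        have h2 : x i / σ i < p.1 (i, j) / p.2 j :=
          lt_of_lt_of_le h1 (csInf_le hfin.bddBelow
            (Set.mem_image_of_mem _ (show j ∈ {j | c i j = 1} from hcij)))
        exact (lt_div_iff₀ (hp j)).mp h2
      · intro h
        rw [mul_comm, ← div_lt_iff₀ (hσ i)]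
        obtain ⟨j, hjK, hfj⟩ := hne.csInf_mem hfin
        rw [← hfj]
        exact (lt_div_iff₀ (hp j)).mpr (h j hjK)
    constructor
    · intro h
      exact ⟨hp, fun i => (hiff i).mp (h i)⟩
    · rintro ⟨-, h⟩ i
      exact (hiff i).mpr (h i)
  -- a.e. equality of the two sets
  have hae : {p | ∀ i, x i < X i p} =ᵐ[μu.prod μl] T := by
    rw [MeasureTheory.ae_eq_set]
    constructor
    · refine measure_mono_null (fun p hp => ?_) hνN
      exact fun hpos => hp.2 ((key p hpos).mp hp.1)
    · refine measure_mono_null (fun p hp => ?_) hνN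
      exact (hp.2 ((key p hp.1.1).mpr hp.1)).elim
  rw [measure_congr hae, Measure.prod_apply_symm hTm]
  -- the slice measure
  have hslice : ∀ l : Fin (n + 1) → ℝ, (∀ j, 0 < l j) →
      μu ((fun u => (u, l)) ⁻¹' T) = ∏ j, ENNReal.ofReal (exp (-(s j * l j))) := by
    intro l hl
    have hset : (fun u : Fin n × Fin (n + 1) → ℝ => (u, l)) ⁻¹' T
        = Set.pi Set.univ (fun q : Fin n × Fin (n + 1) =>
            if c q.1 q.2 = 1 then Set.Ioi ((x q.1 / σ q.1) * l q.2) else Set.univ) := by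
      ext u
      simp only [Set.mem_preimage, hTdef, Set.mem_setOf_eq, Set.mem_pi, Set.mem_univ,
        forall_true_left]
      constructor
      · rintro ⟨-, h⟩ ⟨i, j⟩
        by_cases hcij : c i j = 1
        · simp [hcij, h i j hcij]
        · simp [hcij]
      · intro h
        refine ⟨hl, fun i j hcij => ?_⟩
        have := h (i, j)
        simpa [hcij] using this
    rw [hset, hμu, Measure.pi_pi]
    have hfac : ∀ q : Fin n × Fin (n + 1),
        gammaMeasure 1 1 (if c q.1 q.2 = 1 then Set.Ioi ((x q.1 / σ q.1) * l q.2) else Set.univ)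
          = ENNReal.ofReal (exp (-(c q.1 q.2 * (x q.1 / σ q.1) * l q.2))) := by
      rintro ⟨i, j⟩
      rcases hc i j with h0 | h1
      · rw [if_neg (by rw [h0]; norm_num), measure_univ, h0]
        norm_num
      · rw [if_pos h1,
          aux_gamma11_Ioi (mul_nonneg (div_nonneg (hx i) (hσ i).le) (hl j).le), h1, one_mul]
    simp_rw [hfac]
    rw [Fintype.prod_prod_type_right]
    refine Finset.prod_congr rfl fun j _ => ?_
    rw [← ENNReal.ofReal_prod_of_nonneg (fun i _ => (exp_pos _).le), ← Real.exp_sum]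
    congr 2
    rw [Finset.sum_neg_distrib]
    congr 1
    rw [hsdef]
    rw [Finset.sum_mul]
    exact Finset.sum_congr rfl fun i _ => by
      show c i j * (x i / σ i) * l j = c i j / σ i * x i * l j
      ring
  have hcongr : ∫⁻ l, μu ((fun u => (u, l)) ⁻¹' T) ∂μl
      = ∫⁻ l, ∏ j, ENNReal.ofReal (exp (-(s j * l j))) ∂μl := by
    refine lintegral_congr_ae ?_
    have hev : ∀ᵐ l ∂μl, ∀ j, 0 < l j := by
      rw [ae_iff]
      exact hBnull
    filter_upwards [hev] with l hl using hslice l hl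
  rw [hcongr, hμl, aux_lintegral_pi_prod (fun j => gammaMeasure (γ j) 1)
    (fun j y => ENNReal.ofReal (exp (-(s j * y))))
    (fun j => ((measurable_const.mul measurable_id).neg.exp).ennreal_ofReal)]
  have hlap : ∀ j, ∫⁻ y, ENNReal.ofReal (exp (-(s j * y))) ∂gammaMeasure (γ j) 1
      = ENNReal.ofReal ((1 + s j) ^ (-(γ j))) := fun j => aux_gamma_laplace (hγ j) (hs0 j)
  simp_rw [hlap]
  rw [← ENNReal.ofReal_prod_of_nonneg (fun j _ => rpow_nonneg (by linarith [hs0 j]) _)]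
end

section
/- (Economic Conditional Tail Expectation.) Let σ_k, σ_l > 0, γ_k, γ_l ≥ 0, γ_0 > 0 with γ*_k = γ_k + γ_0 > 1 and γ*_l = γ_l + γ_0, and let F̄(s,t) = (1+s/σ_k)^{−γ_k}(1+t/σ_l)^{−γ_l}(1+s/σ_k+t/σ_l)^{−γ_0} be the bivariate Pareto survival function. Fix q ∈ [0,1) and let t_q = σ_l·((1−q)^{−1/γ*_l} − 1) be the Value-at-Risk of the second coordinate at level q, so that F̄(0,t_q) = 1−q. Then the economic CTE, E[X_k | X_l > VaR_q[X_l]] = (1/(1−q))·∫_0^∞ F̄(s, t_q) ds, equals (σ_k/(γ*_k − 1)) · ∑_{m=0}^∞ ((γ_0)_m/(γ*_k)_m) · (t_q/(σ_l + t_q))^m, where (a)_m = ∏_{r=0}^{m−1}(a+r) is the Pochhammer symbol; the series is the Gauss hypergeometric value ₂F₁(γ_0, 1; γ*_k; t_q/(σ_l + t_q)). -/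
open MeasureTheory Real Set Filter Topology

/-- The Pochhammer symbol `(a)_m = a (a+1) ⋯ (a+m-1)`. -/
noncomputable def poch (a : ℝ) (m : ℕ) : ℝ := ∏ r ∈ Finset.range m, (a + r)


lemma poch_zero (a : ℝ) : poch a 0 = 1 := by simp [poch]

lemma poch_succ (a : ℝ) (m : ℕ) : poch a (m+1) = poch a m * (a + m) := by
  simp [poch, Finset.prod_range_succ]

lemma poch_succ' (a : ℝ) (m : ℕ) : poch a (m+1) = a * poch (a+1) m := by
  induction m with
  | zero => simp [poch]
  | succ n ih =>
      rw [poch_succ, ih, poch_succ]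
      push_cast; ring

lemma poch_pos {a : ℝ} (ha : 0 < a) (m : ℕ) : 0 < poch a m := by
  refine Finset.prod_pos fun r _ => by positivity

lemma poch_nonneg {a : ℝ} (ha : 0 ≤ a) (m : ℕ) : 0 ≤ poch a m := by
  refine Finset.prod_nonneg fun r _ => by positivity

lemma poch_one (m : ℕ) : poch 1 m = (Nat.factorial m : ℝ) := by
  induction m with
  | zero => simp [poch]
  | succ n ih => rw [poch_succ, ih, Nat.factorial_succ]; push_cast; ring

/-- ratio-test summability for hypergeometric-type series. -/
lemma summable_poch_ratio {b c u : ℝ} (hb : 0 ≤ b) (hc : 0 < c) (hu0 : 0 ≤ u) (hu1 : u < 1) :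
    Summable (fun m : ℕ => poch b m / poch c m * u ^ m) := by
  set r : ℝ := (1 + u) / 2 with hr
  have hr1 : r < 1 := by rw [hr]; linarith
  have hur : u < r := by rw [hr]; linarith
  have hterm_nonneg : ∀ m : ℕ, 0 ≤ poch b m / poch c m * u ^ m := fun m => by
    have := poch_nonneg hb m; have := poch_pos hc m; positivity
  refine summable_of_ratio_norm_eventually_le hr1 ?_
  -- eventually (b+m)*u ≤ (c+m)*r
  have hev : ∀ᶠ m : ℕ in Filter.atTop, (b + m) * u ≤ (c + m) * r := by
    have : Filter.Tendsto (fun m : ℕ => (m : ℝ)) Filter.atTop Filter.atTop :=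
      tendsto_natCast_atTop_atTop
    have h2 : Filter.Tendsto (fun m : ℕ => (m : ℝ) * (r - u)) Filter.atTop Filter.atTop :=
      this.atTop_mul_const (by linarith)
    filter_upwards [h2.eventually_ge_atTop (b * u - c * r)] with m hm
    nlinarith
  filter_upwards [hev] with m hm
  have hpb := poch_nonneg hb m
  have hpc := poch_pos hc m
  have hpc' := poch_pos hc (m+1)
  rw [Real.norm_eq_abs, Real.norm_eq_abs, abs_of_nonneg (hterm_nonneg _),
    abs_of_nonneg (hterm_nonneg _), poch_succ, poch_succ]
  have hcm : (0:ℝ) < c + m := by positivity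
  rw [div_mul_eq_mul_div, div_le_iff₀ (by positivity)]
  have : poch b m * (b + m) * u^(m+1) ≤ poch b m * ((c+m)*r) * u^m := by
    have hum : (0:ℝ) ≤ u ^ m := by positivity
    calc poch b m * (b + m) * u^(m+1) = poch b m * ((b+m)*u) * u^m := by ring
    _ ≤ poch b m * ((c+m)*r) * u^m := by
        apply mul_le_mul_of_nonneg_right _ hum
        exact mul_le_mul_of_nonneg_left hm hpb
  calc poch b m * (b + m) * u ^ (m + 1) ≤ poch b m * ((c+m)*r) * u^m := this
  _ = r * (poch b m / poch c m * u ^ m) * (poch c m * (c + m)) := by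
      field_simp

lemma binom_summable {γ : ℝ} (hγ : 0 ≤ γ) {w : ℝ} (h0 : 0 ≤ w) (h1 : w < 1) :
    Summable (fun m : ℕ => poch γ m / (Nat.factorial m) * w ^ m) := by
  have := summable_poch_ratio hγ one_pos h0 h1
  simpa [poch_one] using this

lemma binom_summable' {γ : ℝ} (hγ : 0 ≤ γ) {w : ℝ} (h0 : 0 ≤ w) (h1 : w < 1) :
    Summable (fun m : ℕ => poch γ (m+1) / (Nat.factorial m) * w ^ m) := by
  have h := (summable_poch_ratio (by linarith : (0:ℝ) ≤ γ + 1) one_pos h0 h1).mul_left γ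
  refine h.congr fun m => ?_
  simp only [poch_one, poch_succ']
  ring

lemma hasSum_binom {γ : ℝ} (hγ : 0 ≤ γ) {w : ℝ} (h0 : 0 ≤ w) (h1 : w < 1) :
    HasSum (fun m : ℕ => poch γ m / (Nat.factorial m) * w ^ m) ((1 - w) ^ (-γ)) := by
  set g : ℝ → ℝ := fun z => ∑' m : ℕ, poch γ m / (Nat.factorial m) * z ^ m with hg
  set g' : ℝ → ℝ := fun z => ∑' m : ℕ, poch γ (m+1) / (Nat.factorial m) * z ^ m with hg'
  set r : ℝ := (1 + w) / 2 with hrdef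
  have hr0 : 0 < r := by rw [hrdef]; linarith
  have hwr : w < r := by rw [hrdef]; linarith
  have hr1 : r < 1 := by rw [hrdef]; linarith
  set t : Set ℝ := Set.Ioo (-r) r with ht
  set d : ℕ → ℝ → ℝ := fun n y => poch γ n / (Nat.factorial n) * ((n : ℝ) * y ^ (n - 1)) with hd
  set u : ℕ → ℝ := fun n => poch γ n / (Nat.factorial n) * ((n : ℝ) * r ^ (n - 1)) with hu
  have hu_summable : Summable u := by
    rw [← summable_nat_add_iff 1]
    refine (binom_summable' hγ hr0.le hr1).congr fun n => ?_
    simp only [hu, Nat.add_sub_cancel, Nat.factorial_succ, poch_succ]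
    push_cast
    field_simp
  have hbound : ∀ (n : ℕ), ∀ y ∈ t, ‖d n y‖ ≤ u n := by
    intro n y hy
    have hyr : |y| ≤ r := by
      rw [abs_le]; exact ⟨(hy.1).le, (hy.2).le⟩
    have h1' : 0 ≤ poch γ n / (Nat.factorial n) := by
      have := poch_nonneg hγ n; positivity
    simp only [hd, hu, norm_mul, Real.norm_eq_abs]
    have hyp : |y| ^ (n-1) ≤ r ^ (n-1) := pow_le_pow_left₀ (abs_nonneg _) hyr _
    have hn : (0:ℝ) ≤ (n:ℝ) := Nat.cast_nonneg n
    rw [abs_of_nonneg h1', Nat.abs_cast, abs_pow]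
    exact mul_le_mul_of_nonneg_left (mul_le_mul_of_nonneg_left hyp hn) h1'
  have hterm_deriv : ∀ (n : ℕ), ∀ y : ℝ,
      HasDerivAt (fun z : ℝ => poch γ n / (Nat.factorial n) * z ^ n) (d n y) y := by
    intro n y
    exact (hasDerivAt_pow n y).const_mul _
  have hg0 : Summable fun n : ℕ => poch γ n / (Nat.factorial n) * (0:ℝ) ^ n :=
    binom_summable hγ le_rfl one_pos
  have hderiv : ∀ y ∈ t, HasDerivAt g (∑' n : ℕ, d n y) y := by
    intro y hy
    exact hasDerivAt_tsum_of_isPreconnected hu_summable isOpen_Ioo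
      (convex_Ioo _ _).isPreconnected (fun n z _ => hterm_deriv n z)
      (fun n z hz => hbound n z hz) (Set.mem_Ioo.2 ⟨by linarith, hr0⟩) hg0 hy
  -- identify derivative sum with g' for y ≥ 0
  have hsum_d : ∀ y : ℝ, 0 ≤ y → y < 1 → (∑' n : ℕ, d n y) = g' y := by
    intro y hy0 hy1
    have hs : Summable (fun n : ℕ => d (n+1) y) := by
      refine (binom_summable' hγ hy0 hy1).congr fun n => ?_
      simp only [hd, Nat.add_sub_cancel, Nat.factorial_succ, poch_succ]
      push_cast
      field_simp
    have : Summable (fun n : ℕ => d n y) := by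
      rw [← summable_nat_add_iff 1]; exact hs
    rw [Summable.tsum_eq_zero_add this]
    have hd0 : d 0 y = 0 := by simp [hd]
    rw [hd0, zero_add]
    refine tsum_congr fun n => ?_
    simp only [hd, hg', Nat.add_sub_cancel, Nat.factorial_succ]
    push_cast
    field_simp
  -- ODE identity
  have hode : ∀ y : ℝ, 0 ≤ y → y < 1 → (1 - y) * g' y = γ * g y := by
    intro y hy0 hy1
    have hS : Summable (fun n : ℕ => poch γ (n+1) / (Nat.factorial n) * y ^ n) :=
      binom_summable' hγ hy0 hy1
    have hSsum : HasSum (fun n : ℕ => poch γ (n+1) / (Nat.factorial n) * y ^ n) (g' y) :=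
      hS.hasSum
    have hA : HasSum (fun n : ℕ => y * (poch γ (n+1) / (Nat.factorial n) * y ^ n)) (y * g' y) :=
      hSsum.mul_left y
    set f : ℕ → ℝ := fun k : ℕ => (k:ℝ) * (poch γ k / (Nat.factorial k) * y ^ k) with hf
    have hfun : (fun n : ℕ => f (n+1)) = fun n : ℕ => y * (poch γ (n+1) / (Nat.factorial n) * y ^ n) := by
      funext n
      simp only [hf, Nat.factorial_succ]
      have hfn : (Nat.factorial n : ℝ) ≠ 0 := Nat.cast_ne_zero.2 (Nat.factorial_ne_zero n)
      push_cast
      field_simp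
      ring
    have hB : HasSum (fun n : ℕ => f (n+1)) (y * g' y) := by rw [hfun]; exact hA
    have hC : HasSum f (y * g' y) := by
      have := (hasSum_nat_add_iff (f := f) 1).1 hB
      simpa [hf] using this
    have hD : HasSum (fun n : ℕ => γ * (poch γ n / (Nat.factorial n) * y ^ n)) (γ * g y) :=
      (binom_summable hγ hy0 hy1).hasSum.mul_left γ
    have hE : HasSum (fun n : ℕ => poch γ (n+1) / (Nat.factorial n) * y ^ n)
        (γ * g y + y * g' y) := by
      have hfun2 : (fun n : ℕ => γ * (poch γ n / (Nat.factorial n) * y ^ n) + f n)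
          = fun n : ℕ => poch γ (n+1) / (Nat.factorial n) * y ^ n := by
        funext n
        simp only [hf, poch_succ]
        have hfn : (Nat.factorial n : ℝ) ≠ 0 := Nat.cast_ne_zero.2 (Nat.factorial_ne_zero n)
        field_simp
      rw [← hfun2]
      exact hD.add hC
    have := hSsum.unique hE
    linarith [this]
  -- constancy of h
  set h : ℝ → ℝ := fun z => (1 - z) ^ γ * g z with hh
  have hhderiv : ∀ y ∈ Set.Ico (0:ℝ) w, HasDerivWithinAt h 0 (Set.Ici y) y := by
    intro y hy
    have hy0 : (0:ℝ) ≤ y := hy.1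
    have hyw : y < w := hy.2
    have hy1 : y < 1 := by linarith
    have hyt : y ∈ t := Set.mem_Ioo.2 ⟨by linarith, by linarith⟩
    have h1y : (0:ℝ) < 1 - y := by linarith
    have hpow : HasDerivAt (fun z : ℝ => (1 - z) ^ γ) (-1 * γ * (1 - y) ^ (γ - 1)) y := by
      have hbase : HasDerivAt (fun z : ℝ => 1 - z) (-1) y := by
        simpa using (hasDerivAt_id y).const_sub 1
      exact hbase.rpow_const (Or.inl h1y.ne')
    have hgd : HasDerivAt g (g' y) y := by
      have := hderiv y hyt
      rwa [hsum_d y hy0 hy1] at this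
    have := hpow.mul hgd
    have heq : -1 * γ * (1 - y) ^ (γ - 1) * g y + (1 - y) ^ γ * g' y = 0 := by
      have hrw : (1 - y) ^ γ = (1 - y) ^ (γ - 1) * (1 - y) := by
        rw [← Real.rpow_add_one h1y.ne']
        ring_nf
      rw [hrw]
      have h2 := hode y hy0 hy1
      linear_combination ((1:ℝ) - y) ^ (γ - 1) * h2
    rw [heq] at this
    exact this.hasDerivWithinAt
  have hhcont : ContinuousOn h (Set.Icc 0 w) := by
    intro y hy
    have hy0 : (0:ℝ) ≤ y := hy.1
    have hyw : y ≤ w := hy.2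
    have hyt : y ∈ t := Set.mem_Ioo.2 ⟨by linarith, by linarith⟩
    have hy1 : y < 1 := by linarith
    have h1y : (0:ℝ) < 1 - y := by linarith
    have hgd : HasDerivAt g (∑' n : ℕ, d n y) y := hderiv y hyt
    have : ContinuousAt h y := by
      apply ContinuousAt.mul _ hgd.continuousAt
      exact (continuousAt_const.sub continuousAt_id).rpow_const (Or.inl h1y.ne')
    exact this.continuousWithinAt
  have hconst := constant_of_has_deriv_right_zero hhcont hhderiv w (Set.mem_Icc.2 ⟨h0, le_rfl⟩)
  have hg_zero : g 0 = 1 := by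
    have hrfl : g 0 = ∑' m : ℕ, poch γ m / (Nat.factorial m) * (0:ℝ) ^ m := rfl
    rw [hrfl, tsum_eq_single 0 (fun m hm => by simp [zero_pow hm])]
    simp [poch_zero]
  have hh0 : h 0 = 1 := by
    have hrfl : h 0 = (1 - (0:ℝ)) ^ γ * g 0 := rfl
    rw [hrfl, hg_zero]
    simp
  have hgw : g w = (1 - w) ^ (-γ) := by
    have h1w : (0:ℝ) < 1 - w := by linarith
    have hmul : (1 - w) ^ γ * g w = 1 := hconst.trans hh0
    rw [Real.rpow_neg h1w.le]
    exact (inv_eq_of_mul_eq_one_right hmul).symm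
  have hfin := (binom_summable hγ h0 h1).hasSum
  have h2 : (∑' m : ℕ, poch γ m / (Nat.factorial m : ℝ) * w ^ m) = g w := rfl
  rwa [h2, hgw] at hfin

lemma integrable_aux {n : ℕ} {b : ℝ} (hb : (n:ℝ) + 1 < b) :
    IntegrableOn (fun s : ℝ => s ^ n * (1+s) ^ (-b)) (Set.Ioi (0:ℝ)) := by
  have hcont : ContinuousOn (fun s : ℝ => s ^ n * (1+s) ^ (-b)) (Set.Ici (0:ℝ)) := by
    apply ContinuousOn.mul (by fun_prop)
    apply ContinuousOn.rpow_const (by fun_prop)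
    intro x hx
    left
    have : (0:ℝ) ≤ x := hx
    positivity
  have hsplit : Set.Ioi (0:ℝ) = Set.Ioc (0:ℝ) 1 ∪ Set.Ioi 1 := (Set.Ioc_union_Ioi_eq_Ioi zero_le_one).symm
  rw [hsplit]
  apply IntegrableOn.union
  · have h1 : IntegrableOn (fun s : ℝ => s ^ n * (1+s) ^ (-b)) (Set.Icc 0 1) :=
      (hcont.mono Set.Icc_subset_Ici_self).integrableOn_Icc
    exact h1.mono_set Set.Ioc_subset_Icc_self
  · have hmaj : IntegrableOn (fun x : ℝ => x ^ ((n:ℝ) - b)) (Set.Ioi 1) :=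
      integrableOn_Ioi_rpow_of_lt (by linarith) one_pos
    refine Integrable.mono' hmaj ((hcont.mono (fun x hx => le_trans zero_le_one hx.out.le)).aestronglyMeasurable measurableSet_Ioi) ?_
    filter_upwards [ae_restrict_mem measurableSet_Ioi] with x hx
    have hx1 : (1:ℝ) < x := hx
    have hx0 : (0:ℝ) < x := by linarith
    have h1 : (1+x) ^ (-b) ≤ x ^ (-b) :=
      Real.rpow_le_rpow_of_nonpos hx0 (by linarith) (by linarith)
    have h2 : (0:ℝ) ≤ x ^ n := by positivity
    rw [Real.norm_eq_abs, abs_of_nonneg (by positivity)]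
    calc x ^ n * (1+x) ^ (-b) ≤ x ^ n * x ^ (-b) := by
          exact mul_le_mul_of_nonneg_left h1 h2
      _ = x ^ ((n:ℝ) - b) := by
          rw [← Real.rpow_natCast x n, ← Real.rpow_add hx0, sub_eq_add_neg]

lemma tendsto_aux {c : ℝ} (hc : c < 0) :
    Tendsto (fun s : ℝ => (1+s) ^ c) atTop (𝓝 0) := by
  have h1 : Tendsto (fun s : ℝ => 1 + s) atTop atTop := tendsto_atTop_add_const_left _ 1 tendsto_id
  have h2 : Tendsto (fun x : ℝ => x ^ (-(-c))) atTop (𝓝 0) := tendsto_rpow_neg_atTop (by linarith)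
  rw [neg_neg] at h2
  exact h2.comp h1

lemma integral_aux : ∀ (n : ℕ) (b : ℝ), (n:ℝ) + 1 < b →
    ∫ s in Set.Ioi (0:ℝ), s ^ n * (1+s) ^ (-b)
      = (Nat.factorial n : ℝ) / poch (b - (n+1)) (n+1) := by
  intro n
  induction n with
  | zero =>
    intro b hb
    simp only [Nat.cast_zero, zero_add] at hb
    have hderiv : ∀ x ∈ Set.Ici (0:ℝ),
        HasDerivAt (fun s : ℝ => (1-b)⁻¹ * (1+s) ^ (1-b)) ((1+x) ^ (-b)) x := by
      intro x hx
      have hx0 : (0:ℝ) ≤ x := hx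
      have h1x : (0:ℝ) < 1 + x := by linarith
      have hbase : HasDerivAt (fun s : ℝ => 1 + s) 1 x := by
        simpa using (hasDerivAt_id x).const_add 1
      have hder := (hbase.rpow_const (p := 1-b) (Or.inl h1x.ne')).const_mul (1-b)⁻¹
      have hb1 : (1:ℝ) - b ≠ 0 := sub_ne_zero.2 (ne_of_lt hb)
      refine hder.congr_deriv ?_
      rw [show (1:ℝ) - b - 1 = -b by ring, one_mul, inv_mul_cancel_left₀ hb1]
    have hint : IntegrableOn (fun x : ℝ => (1+x) ^ (-b)) (Set.Ioi 0) := by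
      have := integrable_aux (n := 0) (b := b) (by push_cast; linarith)
      simpa using this
    have htend : Tendsto (fun s : ℝ => (1-b)⁻¹ * (1+s) ^ (1-b)) atTop (𝓝 ((1-b)⁻¹ * 0)) :=
      (tendsto_aux (by linarith)).const_mul _
    have hFTC := integral_Ioi_of_hasDerivAt_of_tendsto' hderiv hint (by simpa using htend)
    simp only [pow_zero, one_mul]
    rw [hFTC]
    have hone : ((1:ℝ)+0) ^ ((1:ℝ)-b) = 1 := by norm_num
    rw [hone]
    simp only [poch, Finset.prod_range_one, Nat.factorial_zero, Nat.cast_one, Nat.cast_zero,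
      add_zero, Nat.cast_ofNat]
    have hb1 : b - 1 ≠ 0 := sub_ne_zero.2 (ne_of_gt hb)
    have hb1' : (1:ℝ) - b ≠ 0 := sub_ne_zero.2 (ne_of_lt hb)
    push_cast
    field_simp
    rw [Finset.prod_range_one, Nat.cast_zero, add_zero, zero_add, eq_div_iff hb1]; ring
  | succ n ih =>
    intro b hb
    have hb1 : (n:ℝ) + 1 < b - 1 := by push_cast at hb ⊢; linarith
    have hbpos : (1:ℝ) < b := by push_cast at hb; linarith
    -- F s = s^(n+1) (1+s)^(1-b), F' x = (n+1) x^n (1+x)^(1-b) + (1-b) x^(n+1) (1+x)^(-b)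
    have hderiv : ∀ x ∈ Set.Ici (0:ℝ),
        HasDerivAt (fun s : ℝ => s ^ (n+1) * (1+s) ^ (1-b))
          (((n:ℝ)+1) * (x ^ n * (1+x) ^ (-(b-1))) + (1-b) * (x ^ (n+1) * (1+x) ^ (-b))) x := by
      intro x hx
      have hx0 : (0:ℝ) ≤ x := hx
      have h1x : (0:ℝ) < 1 + x := by linarith
      have hbase : HasDerivAt (fun s : ℝ => 1 + s) 1 x := by
        simpa using (hasDerivAt_id x).const_add 1
      have hp := (hasDerivAt_pow (n+1) x).mul (hbase.rpow_const (p := 1-b) (Or.inl h1x.ne'))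
      refine hp.congr_deriv ?_
      rw [show (1:ℝ) - b - 1 = -b by ring, show -(b-1) = 1-b by ring]
      push_cast
      try simp only [Nat.add_sub_cancel]
      ring
    have hi1 : IntegrableOn (fun x : ℝ => x ^ n * (1+x) ^ (-(b-1))) (Set.Ioi 0) :=
      integrable_aux hb1
    have hi2 : IntegrableOn (fun x : ℝ => x ^ (n+1) * (1+x) ^ (-b)) (Set.Ioi 0) :=
      integrable_aux hb
    have hint : IntegrableOn (fun x : ℝ =>
        ((n:ℝ)+1) * (x ^ n * (1+x) ^ (-(b-1))) + (1-b) * (x ^ (n+1) * (1+x) ^ (-b)))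
        (Set.Ioi 0) := (hi1.const_mul _).add (hi2.const_mul _)
    have htend : Tendsto (fun s : ℝ => s ^ (n+1) * (1+s) ^ (1-b)) atTop (𝓝 0) := by
      -- s^(n+1) (1+s)^(1-b) ≤ (1+s)^(n+1+1-b) for s ≥ 0
      have hup : Tendsto (fun s : ℝ => (1+s) ^ ((n:ℝ)+1+(1-b))) atTop (𝓝 0) := by
        apply tendsto_aux; push_cast at hb; linarith
      apply squeeze_zero_norm' _ hup
      filter_upwards [eventually_ge_atTop (0:ℝ)] with s hs
      have h1s : (0:ℝ) < 1 + s := by linarith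
      rw [Real.norm_eq_abs, abs_of_nonneg (by positivity)]
      calc s ^ (n+1) * (1+s) ^ (1-b) ≤ (1+s) ^ (n+1) * (1+s) ^ (1-b) := by
            apply mul_le_mul_of_nonneg_right _ (by positivity)
            exact pow_le_pow_left₀ hs (by linarith) _
        _ = (1+s) ^ ((n:ℝ)+1+(1-b)) := by
            rw [← Real.rpow_natCast (1+s) (n+1), ← Real.rpow_add h1s]
            push_cast
            ring_nf
    have hFTC := integral_Ioi_of_hasDerivAt_of_tendsto' hderiv hint htend
    simp only [zero_pow (Nat.succ_ne_zero n), zero_mul, zero_sub, neg_eq_zero] at hFTC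
    rw [integral_add ((hi1.const_mul _)) ((hi2.const_mul _)),
      integral_const_mul, integral_const_mul, ih (b-1) hb1] at hFTC
    have hbne : b - 1 ≠ 0 := sub_ne_zero.2 (ne_of_gt hbpos)
    have hPpos : 0 < poch (b - 1 - ((n:ℝ)+1)) (n+1) := by
      apply Finset.prod_pos
      intro r hr
      have hrn : (r:ℝ) ≤ n := by exact_mod_cast Nat.lt_succ_iff.1 (Finset.mem_range.1 hr)
      push_cast at hb
      linarith
    have hP : poch (b - 1 - ((n:ℝ)+1)) (n+1) ≠ 0 := ne_of_gt hPpos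
    set I : ℝ := ∫ x in Set.Ioi (0:ℝ), x ^ (n+1) * (1+x) ^ (-b) with hI
    have h2 : (b-1) * I = ((n:ℝ)+1) * ((Nat.factorial n : ℝ) / poch (b - 1 - ((n:ℝ)+1)) (n+1)) := by
      push_cast at hFTC ⊢
      linarith [hFTC]
    have h3 : ((b-1) * I) * poch (b - 1 - ((n:ℝ)+1)) (n+1) = ((n:ℝ)+1) * (Nat.factorial n : ℝ) := by
      rw [h2]
      field_simp
    have hpoch2 : poch (b - ((n:ℝ)+1+1)) (n+2) = poch (b - 1 - ((n:ℝ)+1)) (n+1) * (b-1) := by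
      rw [show b - ((n:ℝ)+1+1) = b - 1 - ((n:ℝ)+1) from by ring, poch_succ]
      congr 1
      push_cast
      ring
    have hgoal : I = (Nat.factorial (n+1) : ℝ) / poch (b - ((n:ℝ)+1+1)) (n+2) := by
      rw [hpoch2, Nat.factorial_succ]
      rw [eq_div_iff (mul_ne_zero hP hbne)]
      push_cast
      linear_combination h3
    convert hgoal using 3
    push_cast
    ring

/-- rewrite the integrand into the shifted beta form -/
lemma G_eq {γsk : ℝ} (m : ℕ) {y : ℝ} (hy : 0 < y) :
    (1 + y) ^ (-γsk) * (y/(1+y)) ^ m = y ^ m * (1+y) ^ (-(γsk + m)) := by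
  have h1y : (0:ℝ) < 1 + y := by linarith
  rw [div_pow, Real.rpow_neg h1y.le (γsk + (m:ℝ)), Real.rpow_add h1y, Real.rpow_natCast,
    Real.rpow_neg h1y.le γsk]
  field_simp

lemma term_integrable {σ γsk : ℝ} (hσ : 0 < σ) (h1 : 1 < γsk) (m : ℕ) :
    IntegrableOn (fun s : ℝ => (1 + s/σ) ^ (-γsk) * (s/(σ+s)) ^ m) (Set.Ioi (0:ℝ)) := by
  have hbase : IntegrableOn (fun y : ℝ => y ^ m * (1+y) ^ (-(γsk + m))) (Set.Ioi (0:ℝ)) :=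
    integrable_aux (by push_cast; linarith)
  have hG : IntegrableOn (fun y : ℝ => (1 + y) ^ (-γsk) * (y/(1+y)) ^ m) (Set.Ioi (0:ℝ)) := by
    refine hbase.congr_fun (fun y hy => ?_) measurableSet_Ioi
    exact (G_eq m hy).symm
  have := (integrableOn_Ioi_comp_mul_left_iff
    (fun y : ℝ => (1 + y) ^ (-γsk) * (y/(1+y)) ^ m) 0 (inv_pos.2 hσ)).2 (by simpa using hG)
  refine this.congr_fun (fun s hs => ?_) measurableSet_Ioi
  have hs0 : (0:ℝ) < s := hs
  have h1 : σ⁻¹ * s = s / σ := by field_simp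
  have h2 : σ⁻¹ * s / (1 + σ⁻¹ * s) = s / (σ + s) := by
    rw [div_eq_div_iff (by positivity) (by positivity)]
    field_simp
    try ring
  rw [h1] at h2; simp only [h1, h2]
  try rw [h2]

lemma term_integral {σ γsk : ℝ} (hσ : 0 < σ) (h1 : 1 < γsk) (m : ℕ) :
    ∫ s in Set.Ioi (0:ℝ), (1 + s/σ) ^ (-γsk) * (s/(σ+s)) ^ m
      = σ * ((Nat.factorial m : ℝ) / ((γsk - 1) * poch γsk m)) := by
  have hcongr : ∫ s in Set.Ioi (0:ℝ), (1 + s/σ) ^ (-γsk) * (s/(σ+s)) ^ m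
      = ∫ s in Set.Ioi (0:ℝ), (fun y : ℝ => (1 + y) ^ (-γsk) * (y/(1+y)) ^ m) (σ⁻¹ * s) := by
    refine setIntegral_congr_fun measurableSet_Ioi (fun s hs => ?_)
    have hs0 : (0:ℝ) < s := hs
    simp only
    have h1' : σ⁻¹ * s = s / σ := by field_simp
    have h2 : σ⁻¹ * s / (1 + σ⁻¹ * s) = s / (σ + s) := by
      rw [div_eq_div_iff (by positivity) (by positivity)]
      field_simp
      try ring
    rw [h1'] at h2 ⊢
    rw [h2]
  have hcv := integral_comp_mul_left_Ioi
    (fun y : ℝ => (1 + y) ^ (-γsk) * (y/(1+y)) ^ m) 0 (inv_pos.2 hσ)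
  rw [hcongr, hcv, mul_zero, inv_inv, smul_eq_mul]
  congr 1
  have hcongr2 : ∫ y in Set.Ioi (0:ℝ), (1 + y) ^ (-γsk) * (y/(1+y)) ^ m
      = ∫ y in Set.Ioi (0:ℝ), y ^ m * (1+y) ^ (-(γsk + m)) :=
    setIntegral_congr_fun measurableSet_Ioi (fun y hy => G_eq m hy)
  rw [hcongr2, integral_aux m (γsk + m) (by push_cast; linarith)]
  congr 1
  rw [show γsk + (m:ℝ) - ((m:ℝ)+1) = γsk - 1 from by ring, poch_succ' (γsk - 1) m,
    show γsk - 1 + 1 = γsk from by ring]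

/-- economic Conditional Tail Expectation: with
`t_q = σ_l((1-q)^{-1/γ*_l}-1)` one has `F̄(0,t_q) = 1-q` and
`(1/(1-q)) ∫_0^∞ F̄(s,t_q) ds
  = (σ_k/(γ*_k-1)) ∑_m ((γ_0)_m/(γ*_k)_m) (t_q/(σ_l+t_q))^m`,
the series being `₂F₁(γ_0, 1; γ*_k; t_q/(σ_l+t_q))`. -/
theorem economic_conditional_tail_expectation
    (σk σl γk γl γ0 : ℝ)
    (hσk : 0 < σk) (hσl : 0 < σl) (hγk : 0 ≤ γk) (hγl : 0 ≤ γl) (hγ0 : 0 < γ0)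
    (γsk γsl : ℝ) (hγsk : γsk = γk + γ0) (hγsl : γsl = γl + γ0) (hγsk1 : 1 < γsk)
    (Fbar : ℝ → ℝ → ℝ)
    (hF : ∀ s t, Fbar s t
      = (1 + s / σk) ^ (-γk) * (1 + t / σl) ^ (-γl) * (1 + s / σk + t / σl) ^ (-γ0))
    (q : ℝ) (hq : q ∈ Set.Ico (0 : ℝ) 1)
    (tq : ℝ) (htq : tq = σl * ((1 - q) ^ (-(1 / γsl)) - 1)) :
    Fbar 0 tq = 1 - q
      ∧ (1 / (1 - q)) * ∫ s in Set.Ioi (0 : ℝ), Fbar s tq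
          = (σk / (γsk - 1))
              * ∑' m : ℕ, (poch γ0 m / poch γsk m) * (tq / (σl + tq)) ^ m := by
  obtain ⟨hq0, hq1⟩ := hq
  have hp : (0:ℝ) < 1 - q := by linarith
  have hp1 : 1 - q ≤ 1 := by linarith
  have hγsl0 : 0 < γsl := by rw [hγsl]; linarith
  have hγsk0 : 0 < γsk := by linarith
  set c : ℝ := (1 - q) ^ (-(1 / γsl)) with hc
  have hc1 : 1 ≤ c := by
    have hle : -(1/γsl) ≤ (0:ℝ) := by
      have : (0:ℝ) ≤ 1/γsl := by positivity
      linarith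
    have := Real.rpow_le_rpow_of_exponent_ge hp hp1 hle
    rw [Real.rpow_zero] at this
    exact this
  have hc0 : (0:ℝ) < c := lt_of_lt_of_le one_pos hc1
  have htq0 : 0 ≤ tq := by
    rw [htq]
    have : (0:ℝ) ≤ c - 1 := by linarith
    positivity
  have hkey1 : 1 + tq / σl = c := by
    rw [htq]
    field_simp
    ring
  have hcp : c ^ (-γsl) = 1 - q := by
    rw [hc, ← Real.rpow_mul hp.le]
    rw [show -(1/γsl) * -γsl = (1/γsl) * γsl from by ring,
      one_div_mul_cancel (ne_of_gt hγsl0), Real.rpow_one]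
  have hpart1 : Fbar 0 tq = 1 - q := by
    rw [hF, hkey1]
    rw [show (0:ℝ) / σk = 0 from zero_div σk]
    rw [show (1:ℝ) + 0 = 1 from add_zero 1]
    rw [Real.one_rpow, one_mul, hkey1]
    rw [← Real.rpow_add hc0, show -γl + -γ0 = -γsl from by rw [hγsl]; ring, hcp]
  refine ⟨hpart1, ?_⟩
  -- notation
  set u : ℝ := tq / (σl + tq) with hu
  have hslc : σl + tq = σl * c := by
    have : tq / σl = c - 1 := by linarith [hkey1]
    field_simp at this
    linarith
  have hu0 : 0 ≤ u := by rw [hu]; positivity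
  have hu1 : u < 1 := by
    rw [hu, div_lt_one (by positivity)]
    linarith
  set f : ℕ → ℝ → ℝ := fun m s =>
    (poch γ0 m / (Nat.factorial m) * u ^ m) * ((1 + s/σk) ^ (-γsk) * (s/(σk+s)) ^ m) with hf
  -- pointwise series representation
  have hpoint : ∀ s ∈ Set.Ioi (0:ℝ), Fbar s tq = (1 - q) * ∑' m : ℕ, f m s := by
    intro s hs
    have hs0 : (0:ℝ) < s := hs
    have hsk : (0:ℝ) < σk + s := by linarith
    have hx0 : (0:ℝ) < 1 + s/σk := by positivity
    set t : ℝ := s / (σk + s) with hts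
    have ht0 : 0 ≤ t := by positivity
    have ht1 : t < 1 := by rw [hts, div_lt_one hsk]; linarith
    set w : ℝ := u * t with hw
    have hw0 : 0 ≤ w := mul_nonneg hu0 ht0
    have hw1 : w < 1 := by
      calc w ≤ u * 1 := mul_le_mul_of_nonneg_left ht1.le hu0
      _ = u := mul_one u
      _ < 1 := hu1
    have h1w : (0:ℝ) < 1 - w := by linarith
    -- algebraic identity
    have halg : 1 + s / σk + tq / σl = (1 + s/σk) * c * (1 - w) := by
      have htq' : tq = σl * c - σl := by
        rw [htq]; ring
      rw [hw, hts, hu, hslc, htq']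
      field_simp
      ring
    have hsum := hasSum_binom hγ0.le hw0 hw1
    have hrw : (1 + s / σk + tq / σl) ^ (-γ0)
        = (1 + s/σk) ^ (-γ0) * c ^ (-γ0) * (1 - w) ^ (-γ0) := by
      rw [halg, Real.mul_rpow (by positivity) h1w.le,
        Real.mul_rpow hx0.le hc0.le]
    rw [hF, hkey1, hrw, ← hsum.tsum_eq]
    rw [show (1 + s/σk) ^ (-γk) * c ^ (-γl) * ((1 + s/σk) ^ (-γ0) * c ^ (-γ0) * (∑' m : ℕ, poch γ0 m / (Nat.factorial m) * w ^ m))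
        = (c ^ (-γl) * c ^ (-γ0)) * (((1 + s/σk) ^ (-γk) * (1 + s/σk) ^ (-γ0)) * (∑' m : ℕ, poch γ0 m / (Nat.factorial m) * w ^ m)) from by ring]
    rw [← Real.rpow_add hc0, show -γl + -γ0 = -γsl from by rw [hγsl]; ring, hcp,
      ← Real.rpow_add hx0, show -γk + -γ0 = -γsk from by rw [hγsk]; ring]
    congr 1
    rw [← tsum_mul_left]
    refine tsum_congr fun m => ?_
    rw [hf, hw, mul_pow]
    ring
  -- each term integrable with computed integral
  have hint : ∀ m : ℕ, IntegrableOn (f m) (Set.Ioi (0:ℝ)) := fun m =>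
    (term_integrable hσk hγsk1 m).const_mul _
  have hval : ∀ m : ℕ, ∫ s in Set.Ioi (0:ℝ), f m s
      = (σk / (γsk - 1)) * (poch γ0 m / poch γsk m * u ^ m) := by
    intro m
    rw [hf]
    simp only
    rw [MeasureTheory.integral_const_mul, term_integral hσk hγsk1 m]
    have hm : (Nat.factorial m : ℝ) ≠ 0 := Nat.cast_ne_zero.2 (Nat.factorial_ne_zero m)
    have hps : poch γsk m ≠ 0 := ne_of_gt (poch_pos hγsk0 m)
    have hg1 : γsk - 1 ≠ 0 := sub_ne_zero.2 (ne_of_gt hγsk1)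
    field_simp
  have hnonneg : ∀ m : ℕ, ∀ s ∈ Set.Ioi (0:ℝ), 0 ≤ f m s := by
    intro m s hs
    have hs0 : (0:ℝ) < s := hs
    have h1 := poch_nonneg hγ0.le m
    have h2 : (0:ℝ) ≤ (1 + s/σk) := by positivity
    have h3 : (0:ℝ) ≤ s/(σk+s) := by positivity
    rw [hf]
    have := Real.rpow_nonneg h2 (-γsk)
    positivity
  have hsummable : Summable (fun m : ℕ => (σk / (γsk - 1)) * (poch γ0 m / poch γsk m * u ^ m)) :=
    (summable_poch_ratio hγ0.le hγsk0 hu0 hu1).mul_left _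
  have hnorm : ∀ m : ℕ, ∫ s in Set.Ioi (0:ℝ), ‖f m s‖
      = (σk / (γsk - 1)) * (poch γ0 m / poch γsk m * u ^ m) := by
    intro m
    rw [← hval m]
    refine setIntegral_congr_fun measurableSet_Ioi (fun s hs => ?_)
    exact Real.norm_of_nonneg (hnonneg m s hs)
  have hswap := MeasureTheory.integral_tsum_of_summable_integral_norm
    (μ := volume.restrict (Set.Ioi (0:ℝ))) (F := f) hint
    (by
      refine hsummable.congr fun m => ?_
      rw [← hnorm m])
  have hIcongr : ∫ s in Set.Ioi (0:ℝ), Fbar s tq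
      = ∫ s in Set.Ioi (0:ℝ), (1 - q) * ∑' m : ℕ, f m s :=
    setIntegral_congr_fun measurableSet_Ioi hpoint
  rw [hIcongr, MeasureTheory.integral_const_mul, ← hswap]
  rw [show (∑' m : ℕ, ∫ s in Set.Ioi (0:ℝ), f m s)
      = ∑' m : ℕ, (σk / (γsk - 1)) * (poch γ0 m / poch γsk m * u ^ m) from
    tsum_congr hval, tsum_mul_left]
  rw [← mul_assoc, ← mul_assoc, one_div, inv_mul_cancel₀ (ne_of_gt hp), one_mul]
end
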